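/- Let σ have ‖σ''‖_∞ ≤ σ₂, ‖σ'''‖_∞ ≤ σ₃, let ‖θ_i(0)‖_∞ ≤ a for all i, and suppose ‖θ_i - θ_i(0)‖₂ ≤ p/√m for all i. Then there exists C depending polynomially on a, d, p, c_Ω, σ₂, σ₃ such that for the shallow network F with symmetric initialization (so Δ_x F(x; θ(0)) = 0), |Δ_x F(x; θ)| ≤ C for all x with ‖x‖₂ ≤ c_Ω, uniformly in the width m. -/

import Mathlib

open scoped RealInnerProductSpace

lemma coord_abs_le_norm {n : ℕ} (y : EuclideanSpace ℝ (Fin n)) (j : Fin n) :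
    |y j| ≤ ‖y‖ := by
  rw [EuclideanSpace.norm_eq]
  have h1 : |y j| = Real.sqrt (‖y j‖ ^ 2) := by
    rw [Real.sqrt_sq_eq_abs, Real.norm_eq_abs, abs_abs]
  rw [h1]
  apply Real.sqrt_le_sqrt
  exact Finset.single_le_sum (f := fun k => ‖y k‖ ^ 2)
    (fun k _ => sq_nonneg _) (Finset.mem_univ j)

/-- Uniform (width-independent) bound on the Laplacian of a shallow network whose
weights stay in the projection ball of radius `p/√m` around a symmetric, truncated
initialization (so that `Δ_x F(x;θ(0)) = 0`). -/
theorem shallow_network_laplacian_uniform_bound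
    (d : ℕ) (σ : ℝ → ℝ) (σ₂ σ₃ a p cΩ : ℝ) (hp : 0 < p) (ha : 0 < a)
    (hσ : Differentiable ℝ σ) (hσ' : Differentiable ℝ (deriv σ))
    (hσ'' : Differentiable ℝ (deriv (deriv σ)))
    (hσ₂ : ∀ z : ℝ, |deriv (deriv σ) z| ≤ σ₂)
    (hσ₃ : ∀ z : ℝ, |deriv (deriv (deriv σ)) z| ≤ σ₃) :
    ∃ C : ℝ, 0 < C ∧
      ∀ (m : ℕ), 0 < m →
        ∀ (c : Fin m → ℝ), (∀ i, |c i| = 1) →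
        ∀ (θ θ0 : Fin m → EuclideanSpace ℝ (Fin d)),
          (∀ i, ∀ j : Fin d, |θ0 i j| ≤ a) →
          (∀ i, ‖θ i - θ0 i‖ ≤ p / Real.sqrt m) →
          (∀ x : EuclideanSpace ℝ (Fin d), ‖x‖ ≤ cΩ →
            (1 / Real.sqrt m) * ∑ i, ∑ j : Fin d,
              c i * (θ0 i j) ^ 2 * deriv (deriv σ) ⟪θ0 i, x⟫ = 0) →
          ∀ x : EuclideanSpace ℝ (Fin d), ‖x‖ ≤ cΩ →
            |(1 / Real.sqrt m) * ∑ i, ∑ j : Fin d,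
              c i * (θ i j) ^ 2 * deriv (deriv σ) ⟪θ i, x⟫| ≤ C := by
  have hσ₂0 : 0 ≤ σ₂ := le_trans (abs_nonneg _) (hσ₂ 0)
  have hσ₃0 : 0 ≤ σ₃ := le_trans (abs_nonneg _) (hσ₃ 0)
  -- Lipschitz bound for σ'' with constant σ₃
  have hLip : ∀ u v : ℝ, |deriv (deriv σ) u - deriv (deriv σ) v| ≤ σ₃ * |u - v| := by
    intro u v
    have hl : LipschitzWith σ₃.toNNReal (deriv (deriv σ)) := by
      apply lipschitzWith_of_nnnorm_deriv_le hσ''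
      intro z
      rw [← NNReal.coe_le_coe]
      simpa [Real.coe_toNNReal σ₃ hσ₃0, Real.norm_eq_abs] using hσ₃ z
    have := hl.dist_le_mul u v
    simpa [Real.dist_eq, Real.coe_toNNReal σ₃ hσ₃0] using this
  refine ⟨(d : ℝ) * p * ((p + 2 * a) * σ₂ + a ^ 2 * σ₃ * |cΩ|) + 1, ?_, ?_⟩
  · have : 0 ≤ (d : ℝ) * p * ((p + 2 * a) * σ₂ + a ^ 2 * σ₃ * |cΩ|) := by
      apply mul_nonneg (mul_nonneg (Nat.cast_nonneg d) hp.le)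
      apply add_nonneg (mul_nonneg (by linarith) hσ₂0)
      exact mul_nonneg (mul_nonneg (sq_nonneg a) hσ₃0) (abs_nonneg _)
    linarith
  intro m hm c hc θ θ0 hθ0 hdist hzero x hx
  have hcΩ : 0 ≤ cΩ := le_trans (norm_nonneg x) hx
  have hcΩabs : |cΩ| = cΩ := abs_of_nonneg hcΩ
  have hsm1 : (1 : ℝ) ≤ Real.sqrt m := by
    rw [show (1:ℝ) = Real.sqrt 1 by simp]
    exact Real.sqrt_le_sqrt (by exact_mod_cast hm)
  have hsm0 : 0 < Real.sqrt m := lt_of_lt_of_le one_pos hsm1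
  set t : ℝ := p / Real.sqrt m with ht
  have ht0 : 0 ≤ t := div_nonneg hp.le hsm0.le
  have htp : t ≤ p := by
    rw [ht, div_le_iff₀ hsm0]
    nlinarith
  -- per-term bound
  set B : ℝ := t * (t + 2 * a) * σ₂ + a ^ 2 * (σ₃ * (t * cΩ)) with hB
  have hterm : ∀ i j, |c i * (θ i j) ^ 2 * deriv (deriv σ) ⟪θ i, x⟫
      - c i * (θ0 i j) ^ 2 * deriv (deriv σ) ⟪θ0 i, x⟫| ≤ B := by
    intro i j
    have hdij : |θ i j - θ0 i j| ≤ t := by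
      have := coord_abs_le_norm (θ i - θ0 i) j
      have h2 : (θ i - θ0 i) j = θ i j - θ0 i j := rfl
      rw [h2] at this
      exact this.trans (hdist i)
    have hθij : |θ i j| ≤ a + t := by
      have := abs_sub_abs_le_abs_sub (θ i j) (θ0 i j)
      have := hθ0 i j
      linarith [abs_sub_abs_le_abs_sub (θ i j) (θ0 i j), hdij]
    have hsum : |θ i j + θ0 i j| ≤ t + 2 * a := by
      calc |θ i j + θ0 i j| ≤ |θ i j| + |θ0 i j| := abs_add_le _ _
        _ ≤ (a + t) + a := add_le_add hθij (hθ0 i j)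
        _ = t + 2 * a := by ring
    have hinner : |⟪θ i, x⟫ - ⟪θ0 i, x⟫| ≤ t * cΩ := by
      have h1 : ⟪θ i, x⟫ - ⟪θ0 i, x⟫ = ⟪θ i - θ0 i, x⟫ := by
        rw [inner_sub_left]
      rw [h1]
      calc |⟪θ i - θ0 i, x⟫| ≤ ‖θ i - θ0 i‖ * ‖x‖ := abs_real_inner_le_norm _ _
        _ ≤ t * cΩ := mul_le_mul (hdist i) hx (norm_nonneg _) ht0
    have hkey : c i * (θ i j) ^ 2 * deriv (deriv σ) ⟪θ i, x⟫
        - c i * (θ0 i j) ^ 2 * deriv (deriv σ) ⟪θ0 i, x⟫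
        = c i * (((θ i j) ^ 2 - (θ0 i j) ^ 2) * deriv (deriv σ) ⟪θ i, x⟫
            + (θ0 i j) ^ 2 * (deriv (deriv σ) ⟪θ i, x⟫ - deriv (deriv σ) ⟪θ0 i, x⟫)) := by
      ring
    rw [hkey, abs_mul, hc i, one_mul]
    calc |((θ i j) ^ 2 - (θ0 i j) ^ 2) * deriv (deriv σ) ⟪θ i, x⟫
          + (θ0 i j) ^ 2 * (deriv (deriv σ) ⟪θ i, x⟫ - deriv (deriv σ) ⟪θ0 i, x⟫)|
        ≤ |((θ i j) ^ 2 - (θ0 i j) ^ 2)| * |deriv (deriv σ) ⟪θ i, x⟫|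
          + |(θ0 i j) ^ 2| * |deriv (deriv σ) ⟪θ i, x⟫ - deriv (deriv σ) ⟪θ0 i, x⟫| := by
          calc _ ≤ |((θ i j) ^ 2 - (θ0 i j) ^ 2) * deriv (deriv σ) ⟪θ i, x⟫|
                + |(θ0 i j) ^ 2 * (deriv (deriv σ) ⟪θ i, x⟫ - deriv (deriv σ) ⟪θ0 i, x⟫)| :=
                abs_add_le _ _
            _ = _ := by rw [abs_mul, abs_mul]
      _ ≤ (t * (t + 2 * a)) * σ₂ + a ^ 2 * (σ₃ * (t * cΩ)) := by
          apply add_le_add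
          · apply mul_le_mul _ (hσ₂ _) (abs_nonneg _)
              (mul_nonneg ht0 (by linarith))
            have : (θ i j) ^ 2 - (θ0 i j) ^ 2 = (θ i j - θ0 i j) * (θ i j + θ0 i j) := by ring
            rw [this, abs_mul]
            exact mul_le_mul hdij hsum (abs_nonneg _) ht0
          · apply mul_le_mul
            · rw [abs_of_nonneg (sq_nonneg _)]
              exact sq_le_sq' (by linarith [(abs_le.mp (hθ0 i j)).1]) (abs_le.mp (hθ0 i j)).2
            · exact (hLip _ _).trans (by
                have := mul_le_mul_of_nonneg_left hinner hσ₃0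
                linarith)
            · exact abs_nonneg _
            · exact sq_nonneg _
      _ = B := by rw [hB]
  have hB0 : 0 ≤ B := by
    rw [hB]
    apply add_nonneg
    · exact mul_nonneg (mul_nonneg ht0 (by linarith)) hσ₂0
    · exact mul_nonneg (sq_nonneg a) (mul_nonneg hσ₃0 (mul_nonneg ht0 hcΩ))
  -- subtract the zero term
  have hz := hzero x hx
  have hrw : (1 / Real.sqrt m) * ∑ i, ∑ j : Fin d,
        c i * (θ i j) ^ 2 * deriv (deriv σ) ⟪θ i, x⟫
      = (1 / Real.sqrt m) * ∑ i, ∑ j : Fin d,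
        (c i * (θ i j) ^ 2 * deriv (deriv σ) ⟪θ i, x⟫
          - c i * (θ0 i j) ^ 2 * deriv (deriv σ) ⟪θ0 i, x⟫) := by
    simp only [Finset.sum_sub_distrib, mul_sub]
    linarith [hz]
  rw [hrw]
  have habs : |(1 / Real.sqrt m) * ∑ i, ∑ j : Fin d,
        (c i * (θ i j) ^ 2 * deriv (deriv σ) ⟪θ i, x⟫
          - c i * (θ0 i j) ^ 2 * deriv (deriv σ) ⟪θ0 i, x⟫)|
      ≤ (1 / Real.sqrt m) * ((m : ℝ) * ((d : ℝ) * B)) := by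
    rw [abs_mul, abs_of_nonneg (by positivity : (0:ℝ) ≤ 1 / Real.sqrt m)]
    apply mul_le_mul_of_nonneg_left _ (by positivity)
    calc |∑ i, ∑ j : Fin d, (c i * (θ i j) ^ 2 * deriv (deriv σ) ⟪θ i, x⟫
          - c i * (θ0 i j) ^ 2 * deriv (deriv σ) ⟪θ0 i, x⟫)|
        ≤ ∑ i, |∑ j : Fin d, (c i * (θ i j) ^ 2 * deriv (deriv σ) ⟪θ i, x⟫
          - c i * (θ0 i j) ^ 2 * deriv (deriv σ) ⟪θ0 i, x⟫)| := Finset.abs_sum_le_sum_abs _ _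
      _ ≤ ∑ _i : Fin m, (d : ℝ) * B := by
          apply Finset.sum_le_sum
          intro i _
          calc |∑ j : Fin d, (c i * (θ i j) ^ 2 * deriv (deriv σ) ⟪θ i, x⟫
                - c i * (θ0 i j) ^ 2 * deriv (deriv σ) ⟪θ0 i, x⟫)|
              ≤ ∑ j : Fin d, |c i * (θ i j) ^ 2 * deriv (deriv σ) ⟪θ i, x⟫
                - c i * (θ0 i j) ^ 2 * deriv (deriv σ) ⟪θ0 i, x⟫| := Finset.abs_sum_le_sum_abs _ _
            _ ≤ ∑ _j : Fin d, B := Finset.sum_le_sum (fun j _ => hterm i j)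
            _ = (d : ℝ) * B := by simp [mul_comm]
      _ = (m : ℝ) * ((d : ℝ) * B) := by simp [mul_comm]
  refine habs.trans ?_
  -- (1/√m) * m * (d * B) ≤ d * p * (...) + 1
  have hmm : (1 / Real.sqrt m) * (m : ℝ) = Real.sqrt m := by
    rw [div_mul_eq_mul_div, one_mul, ← Real.sqrt_mul_self (Nat.cast_nonneg m)]
    field_simp
    simp [Real.sqrt_nonneg]
  have hst : Real.sqrt m * t = p := by
    rw [ht, mul_div_cancel₀ _ (ne_of_gt hsm0)]
  have hfin : (1 / Real.sqrt m) * ((m : ℝ) * ((d : ℝ) * B))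
      = (d : ℝ) * (p * (t + 2 * a) * σ₂ + a ^ 2 * (σ₃ * (p * cΩ))) := by
    rw [← mul_assoc, hmm]
    have h : Real.sqrt m * B = p * (t + 2 * a) * σ₂ + a ^ 2 * (σ₃ * (p * cΩ)) := by
      rw [hB, ← hst]; ring
    calc Real.sqrt m * ((d : ℝ) * B) = (d : ℝ) * (Real.sqrt m * B) := by ring
      _ = _ := by rw [h]
  rw [hfin, hcΩabs]
  have h1 : p * (t + 2 * a) * σ₂ ≤ p * (p + 2 * a) * σ₂ :=
    mul_le_mul_of_nonneg_right (mul_le_mul_of_nonneg_left (by linarith) hp.le) hσ₂0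
  have h2 : (d : ℝ) * (p * (t + 2 * a) * σ₂ + a ^ 2 * (σ₃ * (p * cΩ)))
      ≤ (d : ℝ) * (p * (p + 2 * a) * σ₂ + a ^ 2 * (σ₃ * (p * cΩ))) := by
    apply mul_le_mul_of_nonneg_left _ (Nat.cast_nonneg d)
    linarith
  have h3 : (d : ℝ) * (p * (p + 2 * a) * σ₂ + a ^ 2 * (σ₃ * (p * cΩ)))
      = (d : ℝ) * p * ((p + 2 * a) * σ₂ + a ^ 2 * σ₃ * cΩ) := by ring
  linarith
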